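/- The Lie algebra g of Theorem B(2) is not Carnot graded, i.e. g is not isomorphic to its associated graded Lie algebra Car(g), whose only difference is that the bracket [x_{2k},x_{2k+1}] = -m is replaced by [x_{2k},x_{2k+1}] = 0. In particular no Lie algebra automorphism of the underlying vector space carries one bracket to the other. -/
import Mathlib


/-- Index type for the basis `x₁,…,x_{2k+1}, n₁,…,n_{2k-1}, m`. -/
abbrev Jk (k : ℕ) := Fin (2 * k + 1) ⊕ Fin (2 * k - 1) ⊕ Unit

def f1 (k : ℕ) (j : Fin (2 * k - 1)) : Fin (2 * k + 1) := ⟨j.1, by have := j.2; omega⟩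

def f2 (k : ℕ) (j : Fin (2 * k - 1)) : Fin (2 * k + 1) := ⟨j.1 + 1, by have := j.2; omega⟩

/-- The bracket of the Lie algebra `g` of Theorem B(2): `[xᵢ, x_{i+1}] = -nᵢ`,
`[xᵢ, nᵢ] = -m` for `1 ≤ i ≤ 2k-1`, and `[x_{2k}, x_{2k+1}] = -m`. -/
def B2 (k : ℕ) (u v : Jk k → ℝ) : Jk k → ℝ := fun j =>
  match j with
  | Sum.inl _ => 0
  | Sum.inr (Sum.inl i) =>
      -(u (Sum.inl (f1 k i)) * v (Sum.inl (f2 k i))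
        - u (Sum.inl (f2 k i)) * v (Sum.inl (f1 k i)))
  | Sum.inr (Sum.inr _) =>
      -(∑ i : Fin (2 * k - 1),
          (u (Sum.inl (f1 k i)) * v (Sum.inr (Sum.inl i))
            - u (Sum.inr (Sum.inl i)) * v (Sum.inl (f1 k i))))
      - (u (Sum.inl ⟨2 * k - 1, by omega⟩) * v (Sum.inl ⟨2 * k, by omega⟩)
          - u (Sum.inl ⟨2 * k, by omega⟩) * v (Sum.inl ⟨2 * k - 1, by omega⟩))

/-- The bracket of the associated Carnot graded Lie algebra `Car(g)`: identical except
that `[x_{2k}, x_{2k+1}] = 0`. -/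
def B2bar (k : ℕ) (u v : Jk k → ℝ) : Jk k → ℝ := fun j =>
  match j with
  | Sum.inl _ => 0
  | Sum.inr (Sum.inl i) =>
      -(u (Sum.inl (f1 k i)) * v (Sum.inl (f2 k i))
        - u (Sum.inl (f2 k i)) * v (Sum.inl (f1 k i)))
  | Sum.inr (Sum.inr _) =>
      -(∑ i : Fin (2 * k - 1),
          (u (Sum.inl (f1 k i)) * v (Sum.inr (Sum.inl i))
            - u (Sum.inr (Sum.inl i)) * v (Sum.inl (f1 k i))))


/-- Delta function at a basis index. -/
def dd (k : ℕ) (a : Jk k) : Jk k → ℝ := fun j => if j = a then 1 else 0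

lemma central_x (k : ℕ) (hk : 2 ≤ k) (u : Jk k → ℝ) (hu : ∀ v, B2 k u v = 0)
    (j : Fin (2 * k + 1)) : u (Sum.inl j) = 0 := by
  rcases lt_trichotomy j.1 (2*k-1) with hj | hj | hj
  · set i : Fin (2*k-1) := ⟨j.1, by omega⟩ with hi
    have h := congrFun (hu (dd k (Sum.inl (f2 k i)))) (Sum.inr (Sum.inl i))
    have h1 : (Sum.inl (f2 k i) : Jk k) ≠ Sum.inl (f1 k i) := by
      simp [f1, f2, Fin.ext_iff]
    have h2 : f1 k i = j := by simp [f1, hi]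
    have h3 : j ≠ f2 k i := by simp [f2, hi, Fin.ext_iff]
    simp [B2, dd, h1.symm, h2, h3] at h
    exact h
  · set i : Fin (2*k-1) := ⟨2*k-2, by omega⟩ with hi
    have h := congrFun (hu (dd k (Sum.inl (f1 k i)))) (Sum.inr (Sum.inl i))
    have h1 : (Sum.inl (f1 k i) : Jk k) ≠ Sum.inl (f2 k i) := by
      simp [f1, f2, Fin.ext_iff]
    have h2 : f2 k i = j := by simp [f2, hi, Fin.ext_iff]; omega
    have h3 : j ≠ f1 k i := by simp [f1, hi, Fin.ext_iff]; omega
    simp [B2, dd, h1.symm, h2, h3] at h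
    exact h
  · have hj' : j.1 = 2*k := by have := j.2; omega
    have h := congrFun (hu (dd k (Sum.inl ⟨2*k-1, by omega⟩))) (Sum.inr (Sum.inr ()))
    have h2 : (⟨2*k, by omega⟩ : Fin (2*k+1)) = j := by simp [Fin.ext_iff]; omega
    have hs : ∀ i' : Fin (2*k-1),
        u (Sum.inl (f1 k i')) * dd k (Sum.inl ⟨2*k-1, by omega⟩) (Sum.inr (Sum.inl i'))
          - u (Sum.inr (Sum.inl i')) * dd k (Sum.inl ⟨2*k-1, by omega⟩) (Sum.inl (f1 k i')) = 0 := by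
      intro i'
      have : (Sum.inl (f1 k i') : Jk k) ≠ Sum.inl ⟨2*k-1, by omega⟩ := by
        have := i'.2; simp [f1, Fin.ext_iff]; omega
      simp [dd, this]
    have hne : (Sum.inl (⟨2*k, by omega⟩ : Fin (2*k+1)) : Jk k) ≠ Sum.inl ⟨2*k-1, by omega⟩ := by
      simp [Fin.ext_iff]; omega
    simp only [B2, Finset.sum_congr rfl (fun i' _ => hs i')] at h
    rw [h2] at h
    have h3 : j ≠ (⟨2*k-1, by omega⟩ : Fin (2*k+1)) := by simp [Fin.ext_iff]; omega
    simp [dd, hne, h3] at h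
    exact h

lemma central_n (k : ℕ) (hk : 2 ≤ k) (u : Jk k → ℝ) (hu : ∀ v, B2 k u v = 0)
    (i : Fin (2 * k - 1)) : u (Sum.inr (Sum.inl i)) = 0 := by
  have hx := central_x k hk u hu
  have h := congrFun (hu (dd k (Sum.inl (f1 k i)))) (Sum.inr (Sum.inr ()))
  have hcond : ∀ i' : Fin (2*k-1), ((Sum.inl (f1 k i') : Jk k) = Sum.inl (f1 k i)) ↔ i' = i := by
    intro i'; simp [f1, Fin.ext_iff]
  simp only [B2, dd, hx, hcond, zero_mul, zero_sub, mul_ite, mul_one, mul_zero] at h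
  simp only [Sum.inr.injEq, Sum.inl.injEq, reduceCtorEq, if_false, zero_sub] at h
  simp only [Pi.zero_apply, Finset.sum_neg_distrib, neg_neg, sub_zero] at h
  simpa [Finset.sum_ite_eq'] using h

lemma bar_central (k : ℕ) (a : Jk k)
    (h1 : ∀ i : Fin (2*k-1), Sum.inl (f1 k i) ≠ a)
    (h2 : ∀ i : Fin (2*k-1), Sum.inl (f2 k i) ≠ a)
    (h3 : ∀ i : Fin (2*k-1), Sum.inr (Sum.inl i) ≠ a) :
    ∀ v, B2bar k (dd k a) v = 0 := by
  intro v
  funext j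
  match j with
  | Sum.inl _ => rfl
  | Sum.inr (Sum.inl i) => simp [B2bar, dd, h1 i, h2 i]
  | Sum.inr (Sum.inr _) =>
    simp only [B2bar, dd, Pi.zero_apply]
    rw [Finset.sum_congr rfl (fun i _ => by simp [h1 i, h3 i] : ∀ i ∈ Finset.univ, _ = (0:ℝ))]
    simp

/-- the Lie algebra `g` of Theorem B(2) is not Carnot graded: no linear
automorphism of the underlying vector space carries the bracket of `g` to the bracket of
its associated graded Lie algebra `Car(g)`. -/
theorem stmt12 (k : ℕ) (hk : 2 ≤ k) :
    ¬ ∃ e : (Jk k → ℝ) ≃ₗ[ℝ] (Jk k → ℝ),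
        ∀ u v : Jk k → ℝ, e (B2 k u v) = B2bar k (e u) (e v) := by
  rintro ⟨e, he⟩
  set X : Jk k := Sum.inl ⟨2*k, by omega⟩ with hX
  set M : Jk k := Sum.inr (Sum.inr ()) with hM
  have hXc : ∀ v, B2bar k (dd k X) v = 0 := by
    apply bar_central
    · intro i; have := i.2; simp [hX, f1, Fin.ext_iff]; omega
    · intro i; have := i.2; simp [hX, f2, Fin.ext_iff]; omega
    · intro i; simp [hX]
  have hMc : ∀ v, B2bar k (dd k M) v = 0 := by
    apply bar_central <;> intro i <;> simp [hM]
  have key : ∀ a : Jk k, (∀ v, B2bar k (dd k a) v = 0) →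
      ∀ v, B2 k (e.symm (dd k a)) v = 0 := by
    intro a ha v
    have h := he (e.symm (dd k a)) v
    rw [e.apply_symm_apply] at h
    have : e (B2 k (e.symm (dd k a)) v) = e 0 := by
      rw [h, ha, map_zero]
    exact e.injective this
  have form : ∀ u : Jk k → ℝ, (∀ v, B2 k u v = 0) → u = (u M) • dd k M := by
    intro u hu
    funext j
    match j with
    | Sum.inl j => simp [dd, hM, central_x k hk u hu]
    | Sum.inr (Sum.inl i) => simp [dd, hM, central_n k hk u hu]
    | Sum.inr (Sum.inr _) => simp [dd, hM]
  set u1 : Jk k → ℝ := e.symm (dd k X) with hu1def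
  set u2 : Jk k → ℝ := e.symm (dd k M) with hu2def
  obtain ⟨c1, e1⟩ : ∃ c, u1 = c • dd k M := ⟨u1 M, form u1 (key X hXc)⟩
  obtain ⟨c2, e2⟩ : ∃ c, u2 = c • dd k M := ⟨u2 M, form u2 (key M hMc)⟩
  have heq : c2 • u1 = c1 • u2 := by
    rw [e1, e2, smul_smul, smul_smul, mul_comm]
  have heq2 : c2 • dd k X = c1 • dd k M := by
    have := congrArg e heq
    rw [map_smul, map_smul, hu1def, hu2def, e.apply_symm_apply, e.apply_symm_apply] at this
    exact this
  have hXM : X ≠ M := by simp [hX, hM]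
  have hc2 : c2 = 0 := by
    have := congrFun heq2 X
    simpa [dd, hXM] using this
  have hc1 : c1 = 0 := by
    have := congrFun heq2 M
    symm
    simpa [dd, hXM, hc2] using this
  have hu1z : u1 = 0 := by rw [e1, hc1, zero_smul]
  have : dd k X = 0 := by
    rw [← e.apply_symm_apply (dd k X), ← hu1def, hu1z, map_zero]
  have := congrFun this X
  simp [dd] at this
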